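/- The past confluence property fails in the frame T = {(x,y) ∈ ℝ² : x + y > 0} with relation (x,y) R (x',y') iff x < x' and y < y': there exist points p, q, r ∈ T with q R p and r R p but no point s ∈ T with s R q and s R r. -/
import Mathlib

/-- Past confluence fails in the triangle frame `T = {(x,y) : x + y > 0}` with the
strict product relation. -/
theorem stmt8 :
    ∃ p q r : ℝ × ℝ, p.1 + p.2 > 0 ∧ q.1 + q.2 > 0 ∧ r.1 + r.2 > 0 ∧
      (q.1 < p.1 ∧ q.2 < p.2) ∧ (r.1 < p.1 ∧ r.2 < p.2) ∧
      ¬ ∃ s : ℝ × ℝ, s.1 + s.2 > 0 ∧ (s.1 < q.1 ∧ s.2 < q.2) ∧ (s.1 < r.1 ∧ s.2 < r.2) := by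
  refine ⟨(2,2), (1,0), (0,1), by norm_num, by norm_num, by norm_num, by norm_num,
    by norm_num, ?_⟩
  rintro ⟨s, hs, ⟨_, h2⟩, ⟨h3, _⟩⟩
  simp only at *
  linarith
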